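/- Let g : ℝ → ℝ be C¹ and a < ū < b. Then for all u₁, u₂ ∈ [ū, b] with u₁ < u₂: (conv_{[ū,b]} g)'(u₂) − (conv_{[ū,b]} g)'(u₁) ≥ (conv_{[a,b]} g)'(u₂) − (conv_{[a,b]} g)'(u₁). (Derivatives at endpoints are one-sided.) -/

import Mathlib

open Set Filter Topology

/-- The convex envelope of `g` on the interval `[a,b]`: the pointwise supremum of all
convex functions on `[a,b]` lying below `g` on `[a,b]`. -/
noncomputable def convEnv (a b : ℝ) (g : ℝ → ℝ) : ℝ → ℝ :=
  fun u => sSup {y : ℝ | ∃ h : ℝ → ℝ, ConvexOn ℝ (Set.Icc a b) h ∧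
    (∀ x ∈ Set.Icc a b, h x ≤ g x) ∧ y = h u}

section Basic
variable {g : ℝ → ℝ} {a b : ℝ}

lemma convEnv_bddAbove {u : ℝ} (hu : u ∈ Icc a b) :
    BddAbove {y : ℝ | ∃ h : ℝ → ℝ, ConvexOn ℝ (Set.Icc a b) h ∧
      (∀ x ∈ Set.Icc a b, h x ≤ g x) ∧ y = h u} := by
  refine ⟨g u, ?_⟩
  rintro y ⟨h, _, hle, rfl⟩
  exact hle u hu

lemma le_convEnv {h : ℝ → ℝ} (hh : ConvexOn ℝ (Icc a b) h)
    (hle : ∀ x ∈ Icc a b, h x ≤ g x) {u : ℝ} (hu : u ∈ Icc a b) :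
    h u ≤ convEnv a b g u :=
  le_csSup (convEnv_bddAbove hu) ⟨h, hh, hle, rfl⟩

lemma convEnv_nonempty (hab : a ≤ b) (hgc : Continuous g) (u : ℝ) :
    {y : ℝ | ∃ h : ℝ → ℝ, ConvexOn ℝ (Set.Icc a b) h ∧
      (∀ x ∈ Set.Icc a b, h x ≤ g x) ∧ y = h u}.Nonempty := by
  obtain ⟨z, hz, hmin⟩ := isCompact_Icc.exists_isMinOn (nonempty_Icc.2 hab) hgc.continuousOn
  exact ⟨g z, fun _ => g z, convexOn_const _ (convex_Icc a b), fun x hx => hmin hx, rfl⟩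

lemma convEnv_le (hab : a ≤ b) (hgc : Continuous g) {u : ℝ} (hu : u ∈ Icc a b) :
    convEnv a b g u ≤ g u := by
  refine csSup_le (convEnv_nonempty hab hgc u) ?_
  rintro y ⟨h, _, hle, rfl⟩
  exact hle u hu

lemma line_convexOn (s : Set ℝ) (hs : Convex ℝ s) (A B e : ℝ) :
    ConvexOn ℝ s (fun z => A + B * (z - e)) := by
  refine ⟨hs, fun x _ y _ p q hp hq hpq => le_of_eq ?_⟩
  simp only [smul_eq_mul]
  linear_combination (B * e - A) * hpq

lemma convEnv_convexOn (hab : a ≤ b) (hgc : Continuous g) :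
    ConvexOn ℝ (Icc a b) (convEnv a b g) := by
  refine ⟨convex_Icc a b, fun x hx y hy p q hp hq hpq => ?_⟩
  refine csSup_le (convEnv_nonempty hab hgc _) ?_
  rintro z ⟨h, hh, hle, rfl⟩
  calc h (p • x + q • y) ≤ p • h x + q • h y := hh.2 hx hy hp hq hpq
    _ ≤ p • convEnv a b g x + q • convEnv a b g y := by
        simp only [smul_eq_mul]
        exact add_le_add (mul_le_mul_of_nonneg_left (le_convEnv hh hle hx) hp)
          (mul_le_mul_of_nonneg_left (le_convEnv hh hle hy) hq)

lemma convEnv_right (hab : a ≤ b) (hg : ContDiff ℝ 1 g) : convEnv a b g b = g b := by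
  refine le_antisymm (convEnv_le hab hg.continuous (right_mem_Icc.2 hab)) ?_
  obtain ⟨C, hC⟩ := isCompact_Icc.exists_bound_of_continuousOn
    (hg.continuous_deriv le_rfl).continuousOn (s := Icc a b)
  have hline : ∀ x ∈ Icc a b, g b + C * (x - b) ≤ g x := by
    intro x hx
    have key := norm_image_sub_le_of_norm_deriv_le_segment' (f := g) (f' := deriv g) (C := C)
      (a := x) (b := b)
      (fun y _ => ((hg.differentiable one_ne_zero) y).hasDerivAt.hasDerivWithinAt)
      (fun y hy => hC y ⟨hx.1.trans hy.1, hy.2.le⟩) b (right_mem_Icc.2 hx.2)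
    rw [Real.norm_eq_abs, abs_le] at key
    linarith [key.1, key.2]
  have := le_convEnv (g := g) (line_convexOn (Icc a b) (convex_Icc a b) (g b) C b)
    hline (right_mem_Icc.2 hab)
  simpa using this

end Basic

section Slope
variable {a b : ℝ} {E : ℝ → ℝ}

lemma tangent_le (hE : ConvexOn ℝ (Icc a b) E) {x mx : ℝ} (hx : x ∈ Icc a b)
    (hmx : HasDerivWithinAt E mx (Icc a b) x) {y : ℝ} (hy : y ∈ Icc a b) :
    E x + mx * (y - x) ≤ E y := by
  rcases lt_trichotomy x y with h | h | h
  · have hslope : Tendsto (slope E x) (𝓝[Ioo x y] x) (𝓝 mx) :=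
      (hasDerivWithinAt_iff_tendsto_slope.1 hmx).mono_left
        (nhdsWithin_mono _ (fun z hz =>
          ⟨⟨hx.1.trans hz.1.le, hz.2.le.trans hy.2⟩, ne_of_gt hz.1⟩))
    have hne : (𝓝[Ioo x y] x).NeBot := left_nhdsWithin_Ioo_neBot h
    have hle : mx ≤ slope E x y := by
      refine le_of_tendsto hslope (eventually_of_mem self_mem_nhdsWithin fun z hz => ?_)
      have := hE.secant_mono hx ⟨hx.1.trans hz.1.le, hz.2.le.trans hy.2⟩ hy
        (ne_of_gt hz.1) (ne_of_gt h) hz.2.le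
      simpa [slope_def_field] using this
    rw [slope_def_field, le_div_iff₀ (by linarith)] at hle
    linarith
  · subst h; simp
  · have hslope : Tendsto (slope E x) (𝓝[Ioo y x] x) (𝓝 mx) :=
      (hasDerivWithinAt_iff_tendsto_slope.1 hmx).mono_left
        (nhdsWithin_mono _ (fun z hz =>
          ⟨⟨hy.1.trans hz.1.le, hz.2.le.trans hx.2⟩, ne_of_lt hz.2⟩))
    have hne : (𝓝[Ioo y x] x).NeBot := right_nhdsWithin_Ioo_neBot h
    have hle : slope E x y ≤ mx := by
      refine ge_of_tendsto hslope (eventually_of_mem self_mem_nhdsWithin fun z hz => ?_)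
      have := hE.secant_mono hx hy ⟨hy.1.trans hz.1.le, hz.2.le.trans hx.2⟩
        (ne_of_lt h) (ne_of_lt hz.2) hz.1.le
      simpa [slope_def_field] using this
    rw [slope_def_field, div_le_iff_of_neg (by linarith)] at hle
    linarith
end Slope

section Extrap
variable {s : Set ℝ} {E : ℝ → ℝ}

lemma extrap_right (hE : ConvexOn ℝ s E) {x xb y mx : ℝ}
    (hx : x ∈ s) (hxb : xb ∈ s) (hy : y ∈ s)
    (h1 : x < xb) (h2 : xb ≤ y) (hgt : E x + mx * (xb - x) < E xb) :
    E x + mx * (y - x) < E y := by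
  have hsec := hE.secant_mono hx hxb hy (ne_of_gt h1) (ne_of_gt (h1.trans_le h2)) h2
  have hxb' : mx < (E xb - E x) / (xb - x) := by
    rw [lt_div_iff₀ (by linarith)]; linarith
  have h3 : mx < (E y - E x) / (y - x) := hxb'.trans_le hsec
  rw [lt_div_iff₀ (by linarith [h1.trans_le h2])] at h3
  linarith

lemma extrap_left (hE : ConvexOn ℝ s E) {x xb y mx : ℝ}
    (hx : x ∈ s) (hxb : xb ∈ s) (hy : y ∈ s)
    (h1 : xb < x) (h2 : y ≤ xb) (hgt : E x + mx * (xb - x) < E xb) :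
    E x + mx * (y - x) < E y := by
  have hsec := hE.secant_mono hx hy hxb (ne_of_lt (h2.trans_lt h1)) (ne_of_lt h1) h2
  have hxb' : (E xb - E x) / (xb - x) < mx := by
    rw [div_lt_iff_of_neg (by linarith)]; linarith
  have h3 : (E y - E x) / (y - x) < mx := lt_of_le_of_lt hsec hxb'
  rw [div_lt_iff_of_neg (by linarith [h2.trans_lt h1])] at h3
  linarith

lemma deriv_unique_affine {c d A B e u m : ℝ} (hcd : c < d)
    (hu : u ∈ Icc c d) (hs : Icc c d ⊆ s)
    (hm : HasDerivWithinAt E m s u)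
    (hE : ∀ y ∈ Icc c d, E y = A + B * (y - e)) : m = B := by
  have hF : HasDerivAt (fun y : ℝ => A + B * (y - e)) B u := by
    simpa using (((hasDerivAt_id u).sub_const e).const_mul B).const_add A
  have h2 : HasDerivWithinAt E B (Icc c d) u :=
    (hF.hasDerivWithinAt).congr (fun y hy => hE y hy) (hE u hu)
  exact (uniqueDiffOn_Icc hcd u hu).eq_deriv _ (hm.mono hs) h2

end Extrap

section Mono
variable {a b : ℝ} {E m : ℝ → ℝ}

lemma deriv_mono (hE : ConvexOn ℝ (Icc a b) E)
    (hm : ∀ u ∈ Icc a b, HasDerivWithinAt E (m u) (Icc a b) u)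
    {x y : ℝ} (hx : x ∈ Icc a b) (hy : y ∈ Icc a b) (hxy : x ≤ y) : m x ≤ m y := by
  rcases eq_or_lt_of_le hxy with h | h
  · subst h; exact le_rfl
  · have h1 := tangent_le hE hx (hm x hx) hy
    have h2 := tangent_le hE hy (hm y hy) hx
    nlinarith [mul_pos (sub_pos.2 h) (sub_pos.2 h)]
end Mono

section Affine
variable {g : ℝ → ℝ} {a b : ℝ}

lemma affine_right (hg : ContDiff ℝ 1 g) (hab : a ≤ b) {x q mx : ℝ}
    (hx : x ∈ Ioo a b)
    (hmx : HasDerivWithinAt (convEnv a b g) mx (Icc a b) x)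
    (hq : q ∈ Icc x b)
    (hnc : ∀ y ∈ Ico x q, convEnv a b g y < g y) :
    ∀ y ∈ Icc x q, convEnv a b g y = convEnv a b g x + mx * (y - x) := by
  set E := convEnv a b g with hEdef
  have hxm : x ∈ Icc a b := ⟨hx.1.le, hx.2.le⟩
  have hEconv : ConvexOn ℝ (Icc a b) E := convEnv_convexOn hab hg.continuous
  have hsub : Icc x q ⊆ Icc a b := fun z hz => ⟨hx.1.le.trans hz.1, hz.2.trans hq.2⟩
  have htan : ∀ y ∈ Icc a b, E x + mx * (y - x) ≤ E y := fun y hy => tangent_le hEconv hxm hmx hy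
  by_contra hcon
  push_neg at hcon
  obtain ⟨y, hy, hne⟩ := hcon
  have hygt : E x + mx * (y - x) < E y := lt_of_le_of_ne (htan y (hsub hy)) (fun h => hne h.symm)
  have hxyne : x ≠ y := by rintro rfl; exact hne (by ring)
  have hxy : x < y := lt_of_le_of_ne hy.1 hxyne
  have hpos : ∀ z ∈ Icc x b, E x + mx * (z - x) < g z := by
    intro z hz
    have hzab : z ∈ Icc a b := ⟨hx.1.le.trans hz.1, hz.2⟩
    rcases lt_or_ge z q with hzq | hzq
    · exact (htan z hzab).trans_lt (hnc z ⟨hz.1, hzq⟩)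
    · have hyz : y ≤ z := hy.2.trans hzq
      exact (extrap_right hEconv hxm (hsub hy) hzab hxy hyz hygt).trans_le
        (convEnv_le hab hg.continuous hzab)
  have hcontmin : ContinuousOn (fun z => g z - (E x + mx * (z - x))) (Icc x b) := by
    exact ((hg.continuous.sub (by continuity)).continuousOn)
  obtain ⟨z₀, hz₀, hminz⟩ := isCompact_Icc.exists_isMinOn (nonempty_Icc.2 hx.2.le) hcontmin
  set c := g z₀ - (E x + mx * (z₀ - x)) with hc
  have hcpos : 0 < c := sub_pos.2 (hpos z₀ hz₀)
  have hcle : ∀ z ∈ Icc x b, c ≤ g z - (E x + mx * (z - x)) := fun z hz => hminz hz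
  set θ := c / (b - x) with hθ
  have hbx : (0:ℝ) < b - x := sub_pos.2 hx.2
  have hθpos : 0 < θ := div_pos hcpos hbx
  have hLle : ∀ z ∈ Icc a b, E x + (mx + θ) * (z - x) ≤ g z := by
    intro z hz
    rcases le_or_gt z x with h | h
    · have h1 : E x + (mx + θ) * (z - x) ≤ E x + mx * (z - x) := by nlinarith
      exact h1.trans ((htan z hz).trans (convEnv_le hab hg.continuous hz))
    · have h1 : θ * (z - x) ≤ c := by
        rw [hθ, div_mul_eq_mul_div, div_le_iff₀ hbx]
        nlinarith [hz.2]
      have h2 := hcle z ⟨h.le, hz.2⟩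
      nlinarith
  have hLE : ∀ z ∈ Icc a b, E x + (mx + θ) * (z - x) ≤ E z := fun z hz =>
    le_convEnv (line_convexOn (Icc a b) (convex_Icc a b) (E x) (mx + θ) x) hLle hz
  have hslope : Tendsto (slope E x) (𝓝[Ioo x b] x) (𝓝 mx) :=
    (hasDerivWithinAt_iff_tendsto_slope.1 hmx).mono_left
      (nhdsWithin_mono _ (fun z hz => ⟨⟨hx.1.le.trans hz.1.le, hz.2.le⟩, ne_of_gt hz.1⟩))
  have hnb : (𝓝[Ioo x b] x).NeBot := left_nhdsWithin_Ioo_neBot hx.2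
  have hcontra : mx + θ ≤ mx := by
    refine ge_of_tendsto hslope (eventually_of_mem self_mem_nhdsWithin fun z hz => ?_)
    have h1 := hLE z ⟨hx.1.le.trans hz.1.le, hz.2.le⟩
    rw [slope_def_field, le_div_iff₀ (sub_pos.2 hz.1)]
    nlinarith
  linarith

lemma affine_left (hg : ContDiff ℝ 1 g) (hab : a ≤ b) {x p mx : ℝ}
    (hx : x ∈ Ioo a b)
    (hmx : HasDerivWithinAt (convEnv a b g) mx (Icc a b) x)
    (hp : p ∈ Icc a x)
    (hnc : ∀ y ∈ Ioc p x, convEnv a b g y < g y) :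
    ∀ y ∈ Icc p x, convEnv a b g y = convEnv a b g x + mx * (y - x) := by
  set E := convEnv a b g with hEdef
  have hxm : x ∈ Icc a b := ⟨hx.1.le, hx.2.le⟩
  have hEconv : ConvexOn ℝ (Icc a b) E := convEnv_convexOn hab hg.continuous
  have hsub : Icc p x ⊆ Icc a b := fun z hz => ⟨hp.1.trans hz.1, hz.2.trans hx.2.le⟩
  have htan : ∀ y ∈ Icc a b, E x + mx * (y - x) ≤ E y := fun y hy => tangent_le hEconv hxm hmx hy
  by_contra hcon
  push_neg at hcon
  obtain ⟨y, hy, hne⟩ := hcon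
  have hygt : E x + mx * (y - x) < E y := lt_of_le_of_ne (htan y (hsub hy)) (fun h => hne h.symm)
  have hxyne : y ≠ x := by rintro rfl; exact hne (by ring)
  have hxy : y < x := lt_of_le_of_ne hy.2 hxyne
  have hpos : ∀ z ∈ Icc a x, E x + mx * (z - x) < g z := by
    intro z hz
    have hzab : z ∈ Icc a b := ⟨hz.1, hz.2.trans hx.2.le⟩
    rcases le_or_gt z y with hzy | hzy
    · exact (extrap_left hEconv hxm (hsub hy) hzab hxy hzy hygt).trans_le
        (convEnv_le hab hg.continuous hzab)
    · exact (htan z hzab).trans_lt (hnc z ⟨lt_of_le_of_lt hy.1 hzy, hz.2⟩)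
  have hcontmin : ContinuousOn (fun z => g z - (E x + mx * (z - x))) (Icc a x) := by
    exact ((hg.continuous.sub (by continuity)).continuousOn)
  obtain ⟨z₀, hz₀, hminz⟩ := isCompact_Icc.exists_isMinOn (nonempty_Icc.2 hx.1.le) hcontmin
  set c := g z₀ - (E x + mx * (z₀ - x)) with hc
  have hcpos : 0 < c := sub_pos.2 (hpos z₀ hz₀)
  have hcle : ∀ z ∈ Icc a x, c ≤ g z - (E x + mx * (z - x)) := fun z hz => hminz hz
  set θ := c / (x - a) with hθ
  have hxa : (0:ℝ) < x - a := sub_pos.2 hx.1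
  have hθpos : 0 < θ := div_pos hcpos hxa
  have hLle : ∀ z ∈ Icc a b, E x + (mx - θ) * (z - x) ≤ g z := by
    intro z hz
    rcases le_or_gt x z with h | h
    · have h1 : E x + (mx - θ) * (z - x) ≤ E x + mx * (z - x) := by nlinarith
      exact h1.trans ((htan z hz).trans (convEnv_le hab hg.continuous hz))
    · have h1 : θ * (x - z) ≤ c := by
        rw [hθ, div_mul_eq_mul_div, div_le_iff₀ hxa]
        nlinarith [hz.1]
      have h2 := hcle z ⟨hz.1, h.le⟩
      nlinarith
  have hLE : ∀ z ∈ Icc a b, E x + (mx - θ) * (z - x) ≤ E z := fun z hz =>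
    le_convEnv (line_convexOn (Icc a b) (convex_Icc a b) (E x) (mx - θ) x) hLle hz
  have hslope : Tendsto (slope E x) (𝓝[Ioo a x] x) (𝓝 mx) :=
    (hasDerivWithinAt_iff_tendsto_slope.1 hmx).mono_left
      (nhdsWithin_mono _ (fun z hz => ⟨⟨hz.1.le, hz.2.le.trans hx.2.le⟩, ne_of_lt hz.2⟩))
  have hnb : (𝓝[Ioo a x] x).NeBot := right_nhdsWithin_Ioo_neBot hx.1
  have hcontra : mx ≤ mx - θ := by
    refine le_of_tendsto hslope (eventually_of_mem self_mem_nhdsWithin fun z hz => ?_)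
    have h1 := hLE z ⟨hz.1.le, hz.2.le.trans hx.2.le⟩
    rw [slope_def_field, div_le_iff_of_neg (sub_neg.2 hz.2)]
    nlinarith
  linarith

end Affine

theorem stmt5 (g : ℝ → ℝ) (hg : ContDiff ℝ 1 g) (a ubar b : ℝ)
    (h1 : a < ubar) (h2 : ubar < b) (m₁ m₂ : ℝ → ℝ)
    (hm₁ : ∀ u ∈ Set.Icc ubar b,
      HasDerivWithinAt (convEnv ubar b g) (m₁ u) (Set.Icc ubar b) u)
    (hm₂ : ∀ u ∈ Set.Icc a b,
      HasDerivWithinAt (convEnv a b g) (m₂ u) (Set.Icc a b) u) :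
    ∀ u₁ ∈ Set.Icc ubar b, ∀ u₂ ∈ Set.Icc ubar b, u₁ < u₂ →
      m₂ u₂ - m₂ u₁ ≤ m₁ u₂ - m₁ u₁ := by
  have hab : a ≤ b := (h1.trans h2).le
  have hub : ubar ≤ b := h2.le
  set E₁ := convEnv ubar b g with hE₁def
  set E₂ := convEnv a b g with hE₂def
  have hgc : Continuous g := hg.continuous
  have hsub : Icc ubar b ⊆ Icc a b := Icc_subset_Icc h1.le le_rfl
  have hE₂cont : ContinuousOn E₂ (Icc a b) := fun u hu => (hm₂ u hu).continuousWithinAt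
  have hE₁conv : ConvexOn ℝ (Icc ubar b) E₁ := convEnv_convexOn hub hgc
  -- E₂ ≤ E₁ on [ubar, b]
  have hle21 : ∀ u ∈ Icc ubar b, E₂ u ≤ E₁ u := by
    intro u hu
    refine csSup_le (convEnv_nonempty hab hgc u) ?_
    rintro y ⟨h, hh, hle, rfl⟩
    exact le_convEnv (hh.subset hsub (convex_Icc _ _)) (fun x hx => hle x (hsub hx)) hu
  -- the contact set and its infimum w
  set W : Set ℝ := {x | x ∈ Icc ubar b ∧ E₂ x = g x} with hWdef
  have hWclosed : IsClosed W := by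
    have : W = Icc ubar b ∩ (fun x => E₂ x - g x) ⁻¹' {0} := by
      ext x; simp [hWdef, sub_eq_zero]
    rw [this]
    exact ContinuousOn.preimage_isClosed_of_isClosed
      ((hE₂cont.mono hsub).sub hgc.continuousOn) isClosed_Icc isClosed_singleton
  have hbW : b ∈ W := ⟨right_mem_Icc.2 hub, convEnv_right hab hg⟩
  have hWbdd : BddBelow W := ⟨ubar, fun y hy => hy.1.1⟩
  set w := sInf W with hwdef
  have hwW : w ∈ W := hWclosed.csInf_mem ⟨b, hbW⟩ hWbdd
  have hwlb : ∀ y ∈ W, w ≤ y := fun y hy => csInf_le hWbdd hy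
  -- fact A : derivative of E₂ constant on [ubar, w]
  have factA : ∀ u, u ∈ Ico ubar w → ∀ v ∈ Ioc u w, m₂ v = m₂ u := by
    intro u hu v hv
    have huab : u ∈ Icc a b := ⟨h1.le.trans hu.1, (hu.2.le.trans hwW.1.2)⟩
    have huIoo : u ∈ Ioo a b := ⟨h1.trans_le hu.1, hu.2.trans_le hwW.1.2⟩
    set Q : Set ℝ := {x | x ∈ Icc u b ∧ E₂ x = g x} with hQdef
    have hQclosed : IsClosed Q := by
      have : Q = Icc u b ∩ (fun x => E₂ x - g x) ⁻¹' {0} := by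
        ext x; simp [hQdef, sub_eq_zero]
      rw [this]
      exact ContinuousOn.preimage_isClosed_of_isClosed
        ((hE₂cont.mono (Icc_subset_Icc huab.1 le_rfl)).sub hgc.continuousOn)
        isClosed_Icc isClosed_singleton
    have hbQ : b ∈ Q := ⟨right_mem_Icc.2 huab.2, hbW.2⟩
    have hQbdd : BddBelow Q := ⟨u, fun y hy => hy.1.1⟩
    set q := sInf Q with hqdef
    have hqQ : q ∈ Q := hQclosed.csInf_mem ⟨b, hbQ⟩ hQbdd
    have hncq : ∀ y ∈ Ico u q, E₂ y < g y := by
      intro y hy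
      refine lt_of_le_of_ne (convEnv_le hab hgc ⟨huab.1.trans hy.1, hy.2.le.trans hqQ.1.2⟩) ?_
      intro h
      exact absurd (csInf_le hQbdd ⟨⟨hy.1, hy.2.le.trans hqQ.1.2⟩, h⟩) (not_le.2 hy.2)
    have hqw : w ≤ q := hwlb q ⟨⟨hu.1.trans hqQ.1.1, hqQ.1.2⟩, hqQ.2⟩
    have haff := affine_right hg hab huIoo (hm₂ u huab) hqQ.1 hncq
    have hvq : Icc u v ⊆ Icc u q := Icc_subset_Icc le_rfl (hv.2.trans hqw)
    exact deriv_unique_affine (A := E₂ u) (B := m₂ u) (e := u) hv.1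
      (right_mem_Icc.2 hv.1.le)
      (Icc_subset_Icc huab.1 ((hv.2.trans hwW.1.2)))
      (hm₂ v ⟨huab.1.trans hv.1.le, hv.2.trans hwW.1.2⟩)
      (fun y hy => haff y (hvq hy))
  -- E₁ = E₂ on [w, b]
  have hE₁₂ : ∀ x ∈ Icc w b, E₁ x = E₂ x := by
    intro x hx
    have hxub : x ∈ Icc ubar b := ⟨hwW.1.1.trans hx.1, hx.2⟩
    have hxab : x ∈ Icc a b := hsub hxub
    refine le_antisymm ?_ (hle21 x hxub)
    by_cases hc : E₂ x = g x
    · rw [hc]; exact convEnv_le hub hgc hxub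
    have hclt : E₂ x < g x := lt_of_le_of_ne (convEnv_le hab hgc hxab) hc
    have hxw : w < x := lt_of_le_of_ne hx.1 (fun h => hc (h ▸ hwW.2))
    have hxb : x < b := lt_of_le_of_ne hx.2 (fun h => hc (by rw [h]; exact hbW.2))
    have hxIoo : x ∈ Ioo a b := ⟨h1.trans_le hxub.1, hxb⟩
    -- left contact point p
    set P : Set ℝ := {z | z ∈ Icc a x ∧ E₂ z = g z} with hPdef
    have hPclosed : IsClosed P := by
      have : P = Icc a x ∩ (fun z => E₂ z - g z) ⁻¹' {0} := by
        ext z; simp [hPdef, sub_eq_zero]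
      rw [this]
      exact ContinuousOn.preimage_isClosed_of_isClosed
        ((hE₂cont.mono (Icc_subset_Icc le_rfl hxab.2)).sub hgc.continuousOn)
        isClosed_Icc isClosed_singleton
    have hwP : w ∈ P := ⟨⟨h1.le.trans hwW.1.1, hxw.le⟩, hwW.2⟩
    have hPbdd : BddAbove P := ⟨x, fun z hz => hz.1.2⟩
    set p := sSup P with hpdef
    have hpP : p ∈ P := hPclosed.csSup_mem ⟨w, hwP⟩ hPbdd
    have hwp : w ≤ p := le_csSup hPbdd hwP
    have hpx : p < x := lt_of_le_of_ne hpP.1.2 (fun h => hc (h ▸ hpP.2))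
    have hncp : ∀ z ∈ Ioc p x, E₂ z < g z := by
      intro z hz
      refine lt_of_le_of_ne (convEnv_le hab hgc ⟨hpP.1.1.trans hz.1.le, hz.2.trans hxab.2⟩) ?_
      intro h
      exact absurd (le_csSup hPbdd ⟨⟨hpP.1.1.trans hz.1.le, hz.2⟩, h⟩) (not_le.2 hz.1)
    -- right contact point q
    set Q : Set ℝ := {z | z ∈ Icc x b ∧ E₂ z = g z} with hQdef
    have hQclosed : IsClosed Q := by
      have : Q = Icc x b ∩ (fun z => E₂ z - g z) ⁻¹' {0} := by
        ext z; simp [hQdef, sub_eq_zero]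
      rw [this]
      exact ContinuousOn.preimage_isClosed_of_isClosed
        ((hE₂cont.mono (Icc_subset_Icc hxab.1 le_rfl)).sub hgc.continuousOn)
        isClosed_Icc isClosed_singleton
    have hbQ : b ∈ Q := ⟨right_mem_Icc.2 hxab.2, hbW.2⟩
    have hQbdd : BddBelow Q := ⟨x, fun z hz => hz.1.1⟩
    set q := sInf Q with hqdef
    have hqQ : q ∈ Q := hQclosed.csInf_mem ⟨b, hbQ⟩ hQbdd
    have hxq : x < q := lt_of_le_of_ne hqQ.1.1 (fun h => hc (by rw [h]; exact hqQ.2))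
    have hncq : ∀ z ∈ Ico x q, E₂ z < g z := by
      intro z hz
      refine lt_of_le_of_ne (convEnv_le hab hgc ⟨hxab.1.trans hz.1, hz.2.le.trans hqQ.1.2⟩) ?_
      intro h
      exact absurd (csInf_le hQbdd ⟨⟨hz.1, hz.2.le.trans hqQ.1.2⟩, h⟩) (not_le.2 hz.2)
    have haffR := affine_right hg hab hxIoo (hm₂ x hxab) hqQ.1 hncq
    have haffL := affine_left hg hab hxIoo (hm₂ x hxab) hpP.1 hncp
    have hEp : E₂ p = E₂ x + m₂ x * (p - x) := haffL p (left_mem_Icc.2 hpx.le)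
    have hEq : E₂ q = E₂ x + m₂ x * (q - x) := haffR q (right_mem_Icc.2 hxq.le)
    -- convexity of E₁ between p and q
    have hpub : p ∈ Icc ubar b := ⟨hwW.1.1.trans hwp, hpP.1.2.trans hxab.2⟩
    have hqub : q ∈ Icc ubar b := ⟨hxub.1.trans hqQ.1.1, hqQ.1.2⟩
    have hpq : p < q := hpx.trans hxq
    have hqp : (0:ℝ) < q - p := sub_pos.2 hpq
    set lam := (q - x) / (q - p) with hlam
    set mu := (x - p) / (q - p) with hmu
    have hlam0 : 0 ≤ lam := div_nonneg (by linarith) hqp.le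
    have hmu0 : 0 ≤ mu := div_nonneg (by linarith) hqp.le
    have hlammu : lam + mu = 1 := by rw [hlam, hmu]; field_simp; ring
    have hcomb := hE₁conv.2 hpub hqub hlam0 hmu0 hlammu
    have hxcomb : lam • p + mu • q = x := by
      rw [hlam, hmu]; simp only [smul_eq_mul]; field_simp; ring
    rw [hxcomb] at hcomb
    have hE₁p : E₁ p ≤ g p := convEnv_le hub hgc hpub
    have hE₁q : E₁ q ≤ g q := convEnv_le hub hgc hqub
    calc E₁ x ≤ lam • E₁ p + mu • E₁ q := hcomb
      _ ≤ lam * g p + mu * g q := by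
          simp only [smul_eq_mul]
          exact add_le_add (mul_le_mul_of_nonneg_left hE₁p hlam0)
            (mul_le_mul_of_nonneg_left hE₁q hmu0)
      _ = E₂ x := by
          rw [← hpP.2, ← hqQ.2, hEp, hEq, hlam, hmu]; field_simp; ring
  -- m₁ = m₂ on [w, b] (when w < b)
  have hmeq : w < b → ∀ u ∈ Icc w b, m₁ u = m₂ u := by
    intro hwb u hu
    have hIccsub₁ : Icc w b ⊆ Icc ubar b := Icc_subset_Icc hwW.1.1 le_rfl
    have e1 : HasDerivWithinAt E₂ (m₁ u) (Icc w b) u :=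
      ((hm₁ u (hIccsub₁ hu)).mono hIccsub₁).congr (fun y hy => (hE₁₂ y hy).symm) (hE₁₂ u hu).symm
    have e2 : HasDerivWithinAt E₂ (m₂ u) (Icc w b) u :=
      (hm₂ u (hsub (hIccsub₁ hu))).mono (Icc_subset_Icc (h1.le.trans hwW.1.1) le_rfl)
    exact (uniqueDiffOn_Icc hwb u hu).eq_deriv _ e1 e2
  -- assembly
  intro u₁ hu₁ u₂ hu₂ h12
  rcases le_or_gt u₂ w with hc1 | hc2
  · have heq : m₂ u₂ = m₂ u₁ := factA u₁ ⟨hu₁.1, h12.trans_le hc1⟩ u₂ ⟨h12, hc1⟩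
    rw [heq]
    have := deriv_mono hE₁conv hm₁ hu₁ hu₂ h12.le
    linarith
  · rcases le_or_gt w u₁ with hc3 | hc4
    · have hwb : w < b := lt_of_le_of_lt hc3 (h12.trans_le hu₂.2)
      rw [hmeq hwb u₁ ⟨hc3, hu₁.2⟩, hmeq hwb u₂ ⟨hc3.trans h12.le, hu₂.2⟩]
    · have hwb : w < b := hc2.trans_le hu₂.2
      have e1 : m₂ w = m₂ u₁ := factA u₁ ⟨hu₁.1, hc4⟩ w ⟨hc4, le_rfl⟩
      have e2 : m₁ w = m₂ w := hmeq hwb w (left_mem_Icc.2 hwb.le)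
      have e3 : m₁ u₂ = m₂ u₂ := hmeq hwb u₂ ⟨hc2.le, hu₂.2⟩
      have e4 : m₁ u₁ ≤ m₁ w := deriv_mono hE₁conv hm₁ hu₁ hwW.1 hc4.le
      linarith
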